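/- Let a, b ∈ (0,1] with a² + b² ≤ 1, and let c ∈ [0,1] with a² + b² ≤ c². Then there exists α₁ ∈ (0,2] such that c^{α₁} = a^{α₁} + b^{α₁}. -/

import Mathlib

lemma cont_rpow_base {c : ℝ} (hc : 0 < c) : Continuous fun x : ℝ => c ^ x := by
  have : (fun x : ℝ => c ^ x) = fun x => Real.exp (Real.log c * x) := by
    ext x; rw [Real.rpow_def_of_pos hc]
  rw [this]
  exact Real.continuous_exp.comp (continuous_const.mul continuous_id)

theorem stmt_5 (a b c : ℝ) (ha : 0 < a) (ha1 : a ≤ 1) (hb : 0 < b) (hb1 : b ≤ 1)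
    (hab : a ^ 2 + b ^ 2 ≤ 1) (hc : 0 ≤ c) (hc1 : c ≤ 1) (habc : a ^ 2 + b ^ 2 ≤ c ^ 2) :
    ∃ α₁ : ℝ, 0 < α₁ ∧ α₁ ≤ 2 ∧ c ^ α₁ = a ^ α₁ + b ^ α₁ := by
  have hcpos : 0 < c := by nlinarith [sq_nonneg a, sq_nonneg b]
  set f : ℝ → ℝ := fun x => c ^ x - a ^ x - b ^ x with hf
  have hcont : Continuous f :=
    ((cont_rpow_base hcpos).sub (cont_rpow_base ha)).sub (cont_rpow_base hb)
  have hf0 : f 0 = -1 := by simp [hf]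
  have hf2 : 0 ≤ f 2 := by
    have h2 : ∀ x : ℝ, 0 ≤ x → x ^ (2:ℝ) = x ^ 2 := fun x hx => by
      rw [show (2:ℝ) = ((2:ℕ):ℝ) by norm_num, Real.rpow_natCast]
    simp only [hf]
    rw [h2 a ha.le, h2 b hb.le, h2 c hc]
    linarith
  have h01 : (0:ℝ) ∈ Set.Icc (f 0) (f 2) := by
    exact ⟨by rw [hf0]; norm_num, hf2⟩
  obtain ⟨x, hx, hfx⟩ := intermediate_value_Icc (by norm_num : (0:ℝ) ≤ 2)
    hcont.continuousOn h01
  have hxne : x ≠ 0 := by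
    rintro rfl; rw [hf0] at hfx; norm_num at hfx
  refine ⟨x, lt_of_le_of_ne hx.1 (Ne.symm hxne), hx.2, ?_⟩
  simp only [hf] at hfx
  linarith
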